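/- Let (X,G) be a dynamical system equipped with an invariant Borel probability measure μ. If H is a subgroup of G such that μ(X_H) > 0, where X_H = {x ∈ X : G_x = gHg⁻¹ for some g ∈ G}, then H is almost normal, i.e., N_G(H) has finite index in G. -/

import Mathlib

open MeasureTheory Pointwise

/-- The conjugate subgroup `g H g⁻¹`. -/
def conjSubgroup {G : Type*} [Group G] (g : G) (H : Subgroup G) : Subgroup G :=
  Subgroup.map (MulAut.conj g).toMonoidHom H

/-- The set `X_H` of points of `X` whose stabilizer is conjugate to `H`. -/
def setXH (G : Type*) {X : Type*} [Group G] [MulAction G X] (H : Subgroup G) : Set X :=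
  {x : X | ∃ g : G, MulAction.stabilizer G x = conjSubgroup g H}

lemma mem_conjSubgroup {G : Type*} [Group G] {g h : G} {H : Subgroup G} :
    h ∈ conjSubgroup g H ↔ g⁻¹ * h * g ∈ H := by
  simp only [conjSubgroup, Subgroup.mem_map, MulEquiv.coe_toMonoidHom, MulAut.conj_apply]
  constructor
  · rintro ⟨k, hk, rfl⟩; group; simpa using hk
  · intro hk; exact ⟨g⁻¹ * h * g, hk, by group⟩

lemma conjSubgroup_conjSubgroup {G : Type*} [Group G] (g g' : G) (H : Subgroup G) :
    conjSubgroup g (conjSubgroup g' H) = conjSubgroup (g * g') H := by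
  ext h
  simp only [mem_conjSubgroup]
  have he : g'⁻¹ * (g⁻¹ * h * g) * g' = (g * g')⁻¹ * h * (g * g') := by group
  rw [he]

lemma conjSubgroup_one {G : Type*} [Group G] (H : Subgroup G) : conjSubgroup 1 H = H := by
  ext h; simp [mem_conjSubgroup]

/-- Let `(X,G)` be a dynamical system with an invariant Borel probability measure `μ`. If `H` is a
subgroup of `G` with `μ(X_H) > 0`, then `H` is almost normal, i.e. `N_G(H)` has finite index. -/
theorem stmt7 {G X : Type*} [Group G] [Countable G]
    [TopologicalSpace X] [CompactSpace X] [T2Space X]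
    [MeasurableSpace X] [BorelSpace X]
    [MulAction G X] [ContinuousConstSMul G X]
    (μ : Measure X) [IsProbabilityMeasure μ]
    (hinv : ∀ (g : G) (A : Set X), μ (g • A) = μ A)
    (H : Subgroup G)
    (hpos : 0 < μ (setXH G H : Set X)) :
    (Subgroup.normalizer (H : Set G)).FiniteIndex := by
  set Y : Set X := {x : X | MulAction.stabilizer G x = H} with hYdef
  -- Y is measurable
  have hYeq : Y = ⋂ g : G, {x : X | g • x = x ↔ g ∈ H} := by
    ext x
    simp only [Set.mem_iInter, Set.mem_setOf_eq, hYdef]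
    constructor
    · intro h g; rw [← h]; exact Iff.rfl
    · intro h
      ext g
      exact (h g).symm.trans Iff.rfl |>.symm
  have hY : MeasurableSet Y := by
    rw [hYeq]
    refine MeasurableSet.iInter fun g => ?_
    by_cases hg : g ∈ H
    · have : {x : X | g • x = x ↔ g ∈ H} = {x : X | g • x = x} := by
        ext x; simp [hg]
      rw [this]
      exact (isClosed_eq (continuous_const_smul g) continuous_id).measurableSet
    · have : {x : X | g • x = x ↔ g ∈ H} = {x : X | g • x = x}ᶜ := by
        ext x; simp [hg]
      rw [this]
      exact (isClosed_eq (continuous_const_smul g) continuous_id).measurableSet.compl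
  -- smul of Y is measurable
  have hsmul : ∀ (g : G) (A : Set X), MeasurableSet A → MeasurableSet (g • A) := by
    intro g A hA
    have : g • A = (fun x => g⁻¹ • x) ⁻¹' A := by
      ext x; exact Set.mem_smul_set_iff_inv_smul_mem
    rw [this]
    exact hA.preimage (continuous_const_smul g⁻¹).measurable
  -- key: x ∈ g • Y ↔ stabilizer x = conjSubgroup g H
  have hmem : ∀ (g : G) (x : X), x ∈ g • Y ↔ MulAction.stabilizer G x = conjSubgroup g H := by
    intro g x
    rw [Set.mem_smul_set_iff_inv_smul_mem]
    have hst : MulAction.stabilizer G (g⁻¹ • x) = conjSubgroup g⁻¹ (MulAction.stabilizer G x) :=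
      MulAction.stabilizer_smul_eq_stabilizer_map_conj g⁻¹ x
    constructor
    · intro h
      have := congrArg (conjSubgroup g) (hst.symm.trans h)
      rwa [conjSubgroup_conjSubgroup, mul_inv_cancel, conjSubgroup_one] at this
    · intro h
      have : conjSubgroup g⁻¹ (MulAction.stabilizer G x) = conjSubgroup g⁻¹ (conjSubgroup g H) :=
        congrArg _ h
      rw [conjSubgroup_conjSubgroup, inv_mul_cancel, conjSubgroup_one] at this
      exact hst.trans this
  by_contra hfin
  -- the quotient is infinite
  have hidx : (Subgroup.normalizer (H : Set G)).index = 0 := by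
    by_contra h; exact hfin ⟨h⟩
  have hinf : Infinite (G ⧸ (Subgroup.normalizer (H : Set G))) := by
    rcases Nat.card_eq_zero.mp hidx with h | h
    · exact (h.false ((1 : G) : G ⧸ (Subgroup.normalizer (H : Set G)))).elim
    · exact h
  -- choose infinitely many pairwise-distinct cosets
  let f : ℕ ↪ G ⧸ (Subgroup.normalizer (H : Set G)) := Infinite.natEmbedding _
  let g : ℕ → G := fun n => (f n).out
  have hg : ∀ n, (g n : G ⧸ (Subgroup.normalizer (H : Set G))) = f n := fun n => QuotientGroup.out_eq' (f n)
  -- pairwise disjoint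
  have hdisj : Pairwise (Function.onFun Disjoint fun n => g n • Y) := by
    intro m n hmn
    rw [Function.onFun, Set.disjoint_left]
    intro x hxm hxn
    have h1 := (hmem (g m) x).mp hxm
    have h2 := (hmem (g n) x).mp hxn
    set k : G := (g n)⁻¹ * g m with hk
    have hconj : conjSubgroup k H = H := by
      have := congrArg (conjSubgroup (g n)⁻¹) (h2.symm.trans h1)
      rw [conjSubgroup_conjSubgroup, conjSubgroup_conjSubgroup, inv_mul_cancel,
        conjSubgroup_one] at this
      exact this.symm
    have hnorm : k ∈ (Subgroup.normalizer (H : Set G)) := by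
      rw [Subgroup.mem_normalizer_iff]
      intro h
      have he : k⁻¹ * (k * h * k⁻¹) * k = h := by group
      constructor
      · intro hh
        rw [← hconj, mem_conjSubgroup, he]; exact hh
      · intro hh
        rw [← hconj, mem_conjSubgroup, he] at hh; exact hh
    have : (g m : G ⧸ (Subgroup.normalizer (H : Set G))) = (g n : G ⧸ (Subgroup.normalizer (H : Set G))) :=
      (QuotientGroup.eq).mpr hnorm |>.symm
    rw [hg, hg] at this
    exact hmn (f.injective this)
  -- measure of Y is positive
  have hsub : setXH G H ⊆ ⋃ g' : G, g' • Y := by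
    intro x hx
    rcases hx with ⟨g', hg'⟩
    exact Set.mem_iUnion.mpr ⟨g', (hmem g' x).mpr hg'⟩
  have hYpos : 0 < μ Y := by
    by_contra h
    push_neg at h
    have hY0 : μ Y = 0 := le_antisymm h zero_le
    have : μ (setXH G H) ≤ ∑' g' : G, μ (g' • Y) :=
      le_trans (measure_mono hsub) (measure_iUnion_le _)
    simp only [hinv, hY0, tsum_zero] at this
    exact absurd (lt_of_lt_of_le hpos this) (lt_irrefl 0)
  -- contradiction: the union has infinite measure
  have hUnion : μ (⋃ n : ℕ, g n • Y) = ∑' n : ℕ, μ (g n • Y) :=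
    measure_iUnion hdisj fun n => hsmul _ _ hY
  have : (⊤ : ENNReal) ≤ μ (⋃ n : ℕ, g n • Y) := by
    rw [hUnion]
    simp only [hinv]
    rw [ENNReal.tsum_const_eq_top_of_ne_zero hYpos.ne']
  have hle : μ (⋃ n : ℕ, g n • Y) ≤ 1 := prob_le_one
  rw [top_le_iff.mp this] at hle
  exact absurd hle (by simp)
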